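/- Let n ≥ 1, let l, r : {1,…,n} → ℝ satisfy l_i < r_i for all i, and let μ be a Borel probability measure on ℝ with CDF F = F_μ. Then μ_n({u ∈ (0,1)^n : F(l_i) < u_i ≤ F(r_i) for all i} ∩ C) = ∏_{i=1}^n (F(r_i) − F(l_i)). In particular the fiducial plausibility of F, computed under the uniform distribution on the constraint set C, is proportional to the likelihood ∏_{i=1}^n (F(r_i) − F(l_i)). -/
import Mathlib


open MeasureTheory ProbabilityTheory

/-- The uniform probability measure on the interval `(0,1) ⊂ ℝ`. -/
noncomputable def unifMeas : Measure ℝ := MeasureTheory.volume.restrict (Set.Ioo (0 : ℝ) 1)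

/-- The `n`-fold product of the uniform measure on `(0,1)`. -/
instance : SigmaFinite unifMeas := by
  unfold unifMeas; infer_instance

noncomputable def unifPi (n : ℕ) : Measure (Fin n → ℝ) := Measure.pi fun _ => unifMeas

lemma unifMeas_Ioc (a b : ℝ) (ha : 0 ≤ a) (hb : b ≤ 1) :
    unifMeas (Set.Ioo (0:ℝ) 1 ∩ Set.Ioc a b) = ENNReal.ofReal (b - a) := by
  rw [unifMeas, Measure.restrict_apply (measurableSet_Ioo.inter measurableSet_Ioc)]
  have h : Set.Ioo (0:ℝ) 1 ∩ Set.Ioc a b ∩ Set.Ioo 0 1 = Set.Ioc a b \ {1} := by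
    ext x
    simp only [Set.mem_inter_iff, Set.mem_Ioo, Set.mem_Ioc, Set.mem_diff,
      Set.mem_singleton_iff]
    constructor
    · rintro ⟨⟨⟨h0, h1⟩, hab⟩, -⟩
      exact ⟨hab, by linarith⟩
    · rintro ⟨⟨hax, hxb⟩, hne⟩
      have h0 : 0 < x := lt_of_le_of_lt ha hax
      have h1 : x < 1 := lt_of_le_of_ne (hxb.trans hb) hne
      exact ⟨⟨⟨h0, h1⟩, hax, hxb⟩, h0, h1⟩
  rw [h, measure_diff_null (Real.volume_singleton), Real.volume_Ioc]

/-- For `l i < r i` and a Borel probability measure `μ` with CDF `F`,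
`μ_n({u ∈ (0,1)^n : F(l i) < u i ≤ F(r i) ∀ i} ∩ C) = ∏ i, (F(r i) − F(l i))`;
hence the fiducial plausibility of `F` under the uniform distribution on `C` is
proportional to the likelihood. -/
theorem stmt9 (n : ℕ) (hn : 1 ≤ n) (l r : Fin n → ℝ) (hlr : ∀ i, l i < r i)
    (μ : Measure ℝ) [IsProbabilityMeasure μ] :
    unifPi n
        ({u : Fin n → ℝ | (∀ i, u i ∈ Set.Ioo (0 : ℝ) 1) ∧
            ∀ i, cdf μ (l i) < u i ∧ u i ≤ cdf μ (r i)} ∩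
          {u : Fin n → ℝ | (∀ i, u i ∈ Set.Ioo (0 : ℝ) 1) ∧
            ∀ i j, r i ≤ l j → u i < u j}) =
      ∏ i : Fin n, ENNReal.ofReal (cdf μ (r i) - cdf μ (l i)) := by
  have hset : ({u : Fin n → ℝ | (∀ i, u i ∈ Set.Ioo (0 : ℝ) 1) ∧
            ∀ i, cdf μ (l i) < u i ∧ u i ≤ cdf μ (r i)} ∩
          {u : Fin n → ℝ | (∀ i, u i ∈ Set.Ioo (0 : ℝ) 1) ∧
            ∀ i j, r i ≤ l j → u i < u j}) =
      Set.pi Set.univ (fun i => Set.Ioo (0:ℝ) 1 ∩ Set.Ioc (cdf μ (l i)) (cdf μ (r i))) := by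
    ext u
    simp only [Set.mem_inter_iff, Set.mem_setOf_eq, Set.mem_univ_pi, Set.mem_Ioc]
    constructor
    · rintro ⟨⟨h1, h2⟩, -⟩ i
      exact ⟨h1 i, h2 i⟩
    · intro h
      refine ⟨⟨fun i => (h i).1, fun i => (h i).2⟩, fun i => (h i).1, ?_⟩
      intro i j hij
      calc u i ≤ cdf μ (r i) := (h i).2.2
        _ ≤ cdf μ (l j) := (cdf μ).mono hij
        _ < u j := (h j).2.1
  rw [hset, unifPi, Measure.pi_pi]
  exact Finset.prod_congr rfl fun i _ =>
    unifMeas_Ioc _ _ (cdf_nonneg μ (l i)) (cdf_le_one μ (r i))
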